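/- Let F be a field of characteristic not 2, K a quadratic field extension of F with nontrivial F-automorphism σ, and b ∈ K \ F. For x0, x1 ∈ K, the determinant of the 2×2 matrix over K with rows (x0, b·σ(x1)) and (x1, σ(x0)) equals x0·σ(x0) − b·x1·σ(x1), and this determinant is nonzero whenever (x0, x1) ≠ (0, 0). -/

import Mathlib

open Module

lemma cay_aux {F K : Type*} [Field F] [Field K] [Algebra F K]
    (hdim : Module.finrank F K = 2)
    (σ : K ≃ₐ[F] K) (hσ : σ ≠ AlgEquiv.refl) :
    (∀ c : K, σ c = c → c ∈ Set.range (algebraMap F K)) ∧ (∀ c : K, σ (σ c) = c) := by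
  -- pick a not fixed by σ
  obtain ⟨a, ha⟩ : ∃ a : K, σ a ≠ a := by
    by_contra h
    push_neg at h
    exact hσ (AlgEquiv.ext fun x => h x)
  have hane : a - σ a ≠ 0 := fun h => ha (by linear_combination -h)
  have hnr : ∀ x : K, x ∈ Set.range (algebraMap F K) → σ x = x := by
    rintro _ ⟨r, rfl⟩; exact σ.commutes r
  -- {1, a} is linearly independent
  have hli : LinearIndependent F ![(1 : K), a] := by
    rw [linearIndependent_fin2]
    constructor
    · simp only [Matrix.cons_val_one, Matrix.head_cons, Matrix.cons_val_zero]
      intro h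
      exact ha (by rw [h, map_zero])
    · intro r hr
      simp only [Matrix.cons_val_one, Matrix.head_cons, Matrix.cons_val_zero] at hr
      apply ha
      have h1 : algebraMap F K r * a = 1 := by rw [← Algebra.smul_def, hr]
      have : a = algebraMap F K r⁻¹ := by
        rw [map_inv₀]; exact eq_inv_of_mul_eq_one_right h1
      rw [this]; exact σ.commutes _
  -- {1, a} spans K
  have hspan : ∀ c : K, ∃ r s : F, r • (1 : K) + s • a = c := by
    intro c
    have hcard : Fintype.card (Fin 2) = finrank F K := by simp [hdim]
    have hsp : Submodule.span F (Set.range ![(1 : K), a]) = ⊤ := by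
      have := (basisOfLinearIndependentOfCardEqFinrank hli hcard).span_eq
      rwa [coe_basisOfLinearIndependentOfCardEqFinrank] at this
    have hmem : c ∈ Submodule.span F ({(1 : K), a} : Set K) := by
      have : Set.range ![(1 : K), a] = {(1 : K), a} := by
        simp [Matrix.range_cons, Matrix.range_empty, Set.pair_comm]
      rw [← this, hsp]; trivial
    exact Submodule.mem_span_pair.mp hmem
  -- a² = p + q a
  obtain ⟨p, q, hpq⟩ := hspan (a * a)
  -- a + σ a = q
  have hsum : a + σ a = algebraMap F K q := by
    have h1 : σ a * σ a = p • (1 : K) + q • σ a := by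
      have := congrArg σ hpq
      simpa [map_add, map_mul, map_smul] using this.symm
    have key : (a + σ a - algebraMap F K q) * (a - σ a) = 0 := by
      have hq : ∀ (r : F) (x : K), r • x = algebraMap F K r * x := fun r x =>
        Algebra.smul_def r x
      rw [hq, hq] at hpq h1
      linear_combination -hpq - h1
    rcases mul_eq_zero.mp key with h | h
    · linear_combination h
    · exact absurd h hane
  have hσσa : σ (σ a) = a := by
    have := congrArg σ hsum
    rw [map_add, σ.commutes] at this
    rw [← hsum] at this
    linear_combination this
  constructor
  · intro c hc
    obtain ⟨r, s, hrs⟩ := hspan c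
    have hσc := congrArg σ hrs
    rw [hc, map_add, map_smul, map_smul, map_one, ← hrs] at hσc
    have hs : s • (σ a - a) = 0 := by
      rw [smul_sub]; linear_combination hσc
    have hs0 : s = 0 := by
      rcases smul_eq_zero.mp hs with h | h
      · exact h
      · exact absurd (by linear_combination -h) hane
    exact ⟨r, by rw [← hrs, hs0, zero_smul, add_zero, Algebra.algebraMap_eq_smul_one]⟩
  · intro c
    obtain ⟨r, s, hrs⟩ := hspan c
    rw [← hrs]
    simp [map_add, map_smul, hσσa]

/-- Let `K/F` be a quadratic field extension (characteristic not 2) with nontrivial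
`F`-automorphism `σ`, and `b ∈ K \ F`. The determinant of the 2×2 matrix with rows
`(x0, b·σ(x1))` and `(x1, σ(x0))` equals `x0·σ(x0) − b·x1·σ(x1)`, and it is nonzero
whenever `(x0, x1) ≠ (0,0)`. -/
theorem cay_codeword_det {F K : Type*} [Field F] [Field K] [Algebra F K]
    (hchar : ringChar F ≠ 2)
    (hdim : Module.finrank F K = 2)
    (σ : K ≃ₐ[F] K) (hσ : σ ≠ AlgEquiv.refl)
    (b : K) (hb : b ∉ Set.range (algebraMap F K))
    (x0 x1 : K) :
    (!![x0, b * σ x1; x1, σ x0]).det = x0 * σ x0 - b * (x1 * σ x1) ∧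
    ((x0, x1) ≠ (0, 0) → (!![x0, b * σ x1; x1, σ x0]).det ≠ 0) := by
  obtain ⟨hfix, hσ2⟩ := cay_aux hdim σ hσ
  have hdet : (!![x0, b * σ x1; x1, σ x0]).det = x0 * σ x0 - b * (x1 * σ x1) := by
    rw [Matrix.det_fin_two_of]; ring
  refine ⟨hdet, fun hne h0 => ?_⟩
  rw [hdet] at h0
  by_cases hx1 : x1 = 0
  · have hx0 : x0 ≠ 0 := fun h => hne (by rw [h, hx1])
    rw [hx1, map_zero] at h0
    simp only [mul_zero, zero_mul, sub_zero, mul_eq_zero] at h0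
    rcases h0 with h | h
    · exact hx0 h
    · exact hx0 (by simpa using congrArg σ.symm h)
  · have hσx1 : σ x1 ≠ 0 := fun h => hx1 (by simpa using congrArg σ.symm h)
    have hbval : b = x0 * σ x0 / (x1 * σ x1) := by
      field_simp
      linear_combination -h0
    apply hb
    apply hfix
    rw [hbval, map_div₀, map_mul, map_mul, hσ2, hσ2]
    ring
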